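/- For every integer r ≥ 1, the limit as t → 1⁺ (t real, t > 1) of (t−1)^r ζ_r(t, t, …, t) exists and equals 1/r!. -/

import Mathlib

open Filter Topology

/-- The Euler–Zagier `r`-ple zeta-function, defined by its multiple series
`ζ_r(s) = ∑_{0 < m₁ < ⋯ < m_r} m₁^{-s₁} ⋯ m_r^{-s_r}`, written via the substitution
`m_j = n₁ + ⋯ + n_j` with `n : Fin r → ℕ+`. -/
noncomputable def eulerZagierZeta {r : ℕ} (s : Fin r → ℂ) : ℂ :=
  ∑' n : Fin r → ℕ+, ∏ j : Fin r, (((∑ i ∈ Finset.Iic j, (n i : ℕ)) : ℂ) ^ (-(s j)))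

open scoped ENNReal NNReal


/-- Bernoulli inequality for nonpositive exponents. -/
lemma ezBern {x p : ℝ} (hx : 0 < 1 + x) (hp : p ≤ 0) : 1 + p * x ≤ (1 + x) ^ p := by
  rw [Real.rpow_def_of_pos hx]
  have h1 : Real.log (1 + x) ≤ x := by
    have := Real.log_le_sub_one_of_pos hx
    linarith
  have h2 : p * x ≤ p * Real.log (1 + x) := by
    exact mul_le_mul_of_nonpos_left h1 hp
  have h3 : Real.log (1 + x) * p + 1 ≤ Real.exp (Real.log (1 + x) * p) :=
    Real.add_one_le_exp _
  nlinarith [h3]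

lemma ezDiff_le {a s : ℝ} (ha : 1 ≤ a) (hs : 1 < s) :
    a ^ (1 - s) - (a + 1) ^ (1 - s) ≤ (s - 1) * a ^ (-s) := by
  have ha0 : 0 < a := by linarith
  have hp : (1 : ℝ) - s ≤ 0 := by linarith
  have key : a ^ (1-s) * (1 + (1-s) * (1/a)) ≤ (a + 1) ^ (1 - s) := by
    have h1 : 0 < 1 + 1/a := by positivity
    have := ezBern (x := 1/a) h1 hp
    have hm : (a * (1 + 1/a)) = a + 1 := by field_simp
    calc a ^ (1-s) * (1 + (1-s) * (1/a)) ≤ a ^ (1-s) * (1 + 1/a) ^ (1-s) := by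
          apply mul_le_mul_of_nonneg_left this (Real.rpow_nonneg ha0.le _)
      _ = (a + 1) ^ (1-s) := by
          rw [← Real.mul_rpow ha0.le h1.le, hm]
  have hpow : a ^ (1-s) * (1/a) = a ^ (-s) := by
    rw [one_div, ← Real.rpow_neg_one a, ← Real.rpow_add ha0]
    ring_nf
  nlinarith [key, hpow]

lemma ezLe_diff {a s : ℝ} (ha : 1 ≤ a) (hs : 1 < s) :
    (s - 1) * (a + 1) ^ (-s) ≤ a ^ (1 - s) - (a + 1) ^ (1 - s) := by
  have ha1 : 0 < a + 1 := by linarith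
  have hp : (1 : ℝ) - s ≤ 0 := by linarith
  have key : (a+1) ^ (1-s) * (1 + (1-s) * (-(1/(a+1)))) ≤ a ^ (1 - s) := by
    have h1 : 0 < 1 + (-(1/(a+1))) := by
      rw [← sub_eq_add_neg, sub_pos]
      rw [div_lt_one ha1]; linarith
    have := ezBern (x := -(1/(a+1))) h1 hp
    have hm : ((a+1) * (1 + (-(1/(a+1))))) = a := by field_simp; ring
    calc (a+1) ^ (1-s) * (1 + (1-s) * (-(1/(a+1)))) ≤ (a+1) ^ (1-s) * (1 + (-(1/(a+1)))) ^ (1-s) := by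
          apply mul_le_mul_of_nonneg_left this (Real.rpow_nonneg ha1.le _)
      _ = a ^ (1-s) := by
          rw [← Real.mul_rpow ha1.le h1.le, hm]
  have hpow : (a+1) ^ (1-s) * (1/(a+1)) = (a+1) ^ (-s) := by
    rw [one_div, ← Real.rpow_neg_one (a+1), ← Real.rpow_add ha1]
    ring_nf
  nlinarith [key, hpow]

noncomputable def ezTailR (s : ℝ) (m : ℕ) : ℝ := ∑' k : ℕ+, ((m + (k : ℕ) : ℕ) : ℝ) ^ (-s)

lemma ezSummable_shift {s : ℝ} (hs : 1 < s) (m : ℕ) :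
    Summable (fun j : ℕ => ((m + 1 + j : ℕ) : ℝ) ^ (-s)) := by
  have h : Summable (fun n : ℕ => (n : ℝ) ^ (-s)) :=
    Real.summable_nat_rpow.mpr (by linarith)
  exact h.comp_injective (fun a b hab => by omega)

lemma ezTailR_eq (s : ℝ) (m : ℕ) :
    ezTailR s m = ∑' j : ℕ, ((m + 1 + j : ℕ) : ℝ) ^ (-s) := by
  rw [ezTailR, ← Equiv.pnatEquivNat.symm.tsum_eq]
  congr 1
  ext j
  congr 2
  simp [Equiv.pnatEquivNat]
  omega

lemma ezSummable_tailR {s : ℝ} (hs : 1 < s) (m : ℕ) :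
    Summable (fun k : ℕ+ => ((m + (k : ℕ) : ℕ) : ℝ) ^ (-s)) := by
  have := ezSummable_shift hs m
  have h2 := this.comp_injective (Equiv.pnatEquivNat.injective)
  apply h2.congr
  intro k
  have hk := k.pos
  simp only [Function.comp, Equiv.pnatEquivNat]
  congr 2
  simp [PNat.natPred]
  omega

lemma ezTailR_nonneg (s : ℝ) (m : ℕ) : 0 ≤ ezTailR s m :=
  tsum_nonneg fun _ => Real.rpow_nonneg (by positivity) _

/-- telescoping sum -/
lemma ezTelescope {s : ℝ} (hs : 1 < s) {m : ℕ} (hm : 1 ≤ m) :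
    HasSum (fun j : ℕ => ((m + j : ℕ) : ℝ) ^ (1 - s) - ((m + j + 1 : ℕ) : ℝ) ^ (1 - s))
      ((m : ℝ) ^ (1 - s)) := by
  set F : ℕ → ℝ := fun j => ((m + j : ℕ) : ℝ) ^ (1 - s) with hF
  have hmono : ∀ j, F (j + 1) ≤ F j := by
    intro j
    apply Real.rpow_le_rpow_of_nonpos
    · have : (0:ℝ) < ((m:ℝ) + j) := by positivity
      push_cast; linarith
    · push_cast; linarith
    · linarith
  have hlim : Tendsto F atTop (nhds 0) := by
    have h1 : Tendsto (fun j : ℕ => ((m + j : ℕ) : ℝ)) atTop atTop := by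
      have hh : Tendsto (fun j : ℕ => m + j) atTop atTop := by
        simpa [Nat.add_comm] using tendsto_add_atTop_nat m
      exact tendsto_natCast_atTop_atTop.comp hh
    have h2 : Tendsto (fun x : ℝ => x ^ (1 - s)) atTop (nhds 0) := by
      have := tendsto_rpow_neg_atTop (y := s - 1) (by linarith)
      simpa [neg_sub] using this
    exact h2.comp h1
  have hps : ∀ n, ∑ j ∈ Finset.range n, (F j - F (j + 1)) = F 0 - F n :=
    fun n => Finset.sum_range_sub' F n
  rw [show (fun j : ℕ => ((m + j : ℕ) : ℝ) ^ (1 - s) - ((m + j + 1 : ℕ) : ℝ) ^ (1 - s)) =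
      fun j => F j - F (j + 1) by ext j; simp only [hF]; push_cast; ring_nf]
  have : Tendsto (fun n => ∑ j ∈ Finset.range n, (F j - F (j + 1))) atTop (nhds ((m:ℝ) ^ (1-s))) := by
    simp only [hps]
    have : Tendsto (fun n => F 0 - F n) atTop (nhds (F 0 - 0)) :=
      (tendsto_const_nhds).sub hlim
    simpa [hF] using this
  exact (hasSum_iff_tendsto_nat_of_nonneg (fun j => by linarith [hmono j]) _).mpr this

lemma ezTailR_def (s : ℝ) (m : ℕ) :
    ezTailR s m = ∑' k : ℕ+, ((m + (k : ℕ) : ℕ) : ℝ) ^ (-s) := rfl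

lemma ezTailR_le {s : ℝ} (hs : 1 < s) {m : ℕ} (hm : 1 ≤ m) :
    (s - 1) * ezTailR s m ≤ (m : ℝ) ^ (1 - s) := by
  rw [ezTailR_eq, ← tsum_mul_left]
  rw [← (ezTelescope hs hm).tsum_eq]
  apply Summable.tsum_le_tsum _ ((ezSummable_shift hs m).mul_left _) (ezTelescope hs hm).summable
  intro j
  have ha : (1:ℝ) ≤ ((m + j : ℕ) : ℝ) := by
    have : (1:ℕ) ≤ m + j := by omega
    exact_mod_cast this
  have := ezLe_diff (a := ((m + j : ℕ) : ℝ)) ha hs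
  have h1 : ((m + j + 1 : ℕ) : ℝ) = ((m + j : ℕ) : ℝ) + 1 := by push_cast; ring
  have h2 : ((m + 1 + j : ℕ) : ℝ) = ((m + j : ℕ) : ℝ) + 1 := by push_cast; ring
  rw [h1, h2]
  exact this

lemma ezLe_tailR {s : ℝ} (hs : 1 < s) (m : ℕ) :
    ((m : ℝ) + 1) ^ (1 - s) ≤ (s - 1) * ezTailR s m := by
  rw [ezTailR_eq, ← tsum_mul_left]
  have ht := ezTelescope hs (m := m + 1) (by omega)
  have hcast : ((m+1 : ℕ) : ℝ) = (m : ℝ) + 1 := by push_cast; ring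
  rw [← hcast, ← ht.tsum_eq]
  apply Summable.tsum_le_tsum _ ht.summable ((ezSummable_shift hs m).mul_left _)
  intro j
  have ha : (1:ℝ) ≤ ((m + 1 + j : ℕ) : ℝ) := by
    have : (1:ℕ) ≤ m + 1 + j := by omega
    exact_mod_cast this
  have := ezDiff_le (a := ((m + 1 + j : ℕ) : ℝ)) ha hs
  have h1 : ((m + 1 + j + 1 : ℕ) : ℝ) = ((m + 1 + j : ℕ) : ℝ) + 1 := by push_cast; ring
  rw [h1]
  exact this

lemma ezTailR_zero_le {s : ℝ} (hs : 1 < s) : (s - 1) * ezTailR s 0 ≤ s := by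
  have hsplit : ezTailR s 0 = 1 + ezTailR s 1 := by
    rw [ezTailR_eq, Summable.tsum_eq_zero_add (ezSummable_shift hs 0), ezTailR_eq]
    congr 1
    · norm_num
    · congr 1; ext j; congr 2; omega
  have h1 := ezTailR_le hs (m := 1) le_rfl
  have h2 : ((1:ℕ) : ℝ) ^ (1 - s) = 1 := by norm_num
  rw [h2] at h1
  rw [hsplit]; nlinarith

noncomputable def ezTailE (s : ℝ) (m : ℕ) : ℝ≥0∞ :=
  ∑' k : ℕ+, ((m + (k : ℕ) : ℕ) : ℝ≥0∞) ^ (-s)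

lemma ezTailE_eq {s : ℝ} (hs : 1 < s) (m : ℕ) :
    ezTailE s m = ENNReal.ofReal (ezTailR s m) := by
  rw [ezTailR_def, ENNReal.ofReal_tsum_of_nonneg (fun k => Real.rpow_nonneg (by positivity) _)
    (ezSummable_tailR hs m)]
  apply tsum_congr
  intro k
  rw [← ENNReal.ofReal_natCast (m + (k:ℕ)), ENNReal.ofReal_rpow_of_pos (by positivity)]

lemma ezNatRpow_ofReal {m : ℕ} (hm : 1 ≤ m) (p : ℝ) :
    ((m : ℝ≥0∞)) ^ p = ENNReal.ofReal ((m : ℝ) ^ p) := by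
  rw [← ENNReal.ofReal_natCast m, ENNReal.ofReal_rpow_of_pos (by exact_mod_cast hm)]

lemma ezTailE_le {s : ℝ} (hs : 1 < s) {m : ℕ} (hm : 1 ≤ m) :
    ENNReal.ofReal (s - 1) * ezTailE s m ≤ (m : ℝ≥0∞) ^ (1 - s) := by
  rw [ezTailE_eq hs, ← ENNReal.ofReal_mul (by linarith), ezNatRpow_ofReal hm]
  exact ENNReal.ofReal_le_ofReal (ezTailR_le hs hm)

lemma ezLe_tailE {s : ℝ} (hs : 1 < s) {m : ℕ} (hm : 1 ≤ m) :
    ENNReal.ofReal ((2:ℝ) ^ (1 - s)) * (m : ℝ≥0∞) ^ (1 - s) ≤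
      ENNReal.ofReal (s - 1) * ezTailE s m := by
  rw [ezTailE_eq hs, ← ENNReal.ofReal_mul (by linarith), ezNatRpow_ofReal hm,
    ← ENNReal.ofReal_mul (by positivity)]
  apply ENNReal.ofReal_le_ofReal
  have hm' : (1:ℝ) ≤ (m:ℝ) := by exact_mod_cast hm
  calc (2:ℝ) ^ (1-s) * (m:ℝ) ^ (1-s) = ((2:ℝ) * m) ^ (1-s) := by
        rw [Real.mul_rpow (by norm_num) (by linarith)]
    _ ≤ ((m:ℝ) + 1) ^ (1-s) := by
        apply Real.rpow_le_rpow_of_nonpos (by linarith) (by linarith) (by linarith)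
    _ ≤ (s - 1) * ezTailR s m := ezLe_tailR hs m

lemma ezTailE_zero_le {s : ℝ} (hs : 1 < s) :
    ENNReal.ofReal (s - 1) * ezTailE s 0 ≤ ENNReal.ofReal s := by
  rw [ezTailE_eq hs, ← ENNReal.ofReal_mul (by linarith)]
  exact ENNReal.ofReal_le_ofReal (ezTailR_zero_le hs)

lemma ezLe_tailE_zero {s : ℝ} (hs : 1 < s) :
    1 ≤ ENNReal.ofReal (s - 1) * ezTailE s 0 := by
  rw [ezTailE_eq hs, ← ENNReal.ofReal_mul (by linarith)]
  have := ezLe_tailR hs 0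
  simp only [Nat.cast_zero, zero_add, Real.one_rpow] at this
  rw [← ENNReal.ofReal_one]
  exact ENNReal.ofReal_le_ofReal this

def ezS {r : ℕ} (n : Fin r → ℕ+) (j : Fin r) : ℕ := ∑ i ∈ Finset.Iic j, (n i : ℕ)

lemma ezS_one_le {r : ℕ} (n : Fin r → ℕ+) (j : Fin r) : 1 ≤ ezS n j := by
  have hmem : j ∈ Finset.Iic j := Finset.mem_Iic.mpr le_rfl
  have h := Finset.single_le_sum (f := fun i : Fin r => (n i : ℕ))
    (fun i _ => Nat.zero_le _) hmem
  exact le_trans (n j).one_le h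

noncomputable def ezA (r : ℕ) (t s : ℝ) : ℝ≥0∞ :=
  ∑' n : Fin (r+1) → ℕ+,
    (∏ j : Fin r, (ezS n j.castSucc : ℝ≥0∞) ^ (-t)) * (ezS n (Fin.last r) : ℝ≥0∞) ^ (-s)

lemma ezA_def (r : ℕ) (t s : ℝ) : ezA r t s =
  ∑' n : Fin (r+1) → ℕ+,
    (∏ j : Fin r, (ezS n j.castSucc : ℝ≥0∞) ^ (-t)) * (ezS n (Fin.last r) : ℝ≥0∞) ^ (-s) := rfl

lemma ezIic_castSucc {r : ℕ} (j : Fin r) :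
    Finset.Iic (j.castSucc) = (Finset.Iic j).map Fin.castSuccEmb := by
  apply Finset.map_injective Fin.valEmbedding
  rw [Finset.map_map, Fin.map_valEmbedding_Iic]
  have hemb : (Fin.castSuccEmb : Fin r ↪ Fin (r+1)).trans Fin.valEmbedding =
      (Fin.valEmbedding : Fin r ↪ ℕ) := by
    ext i
    simp
  rw [hemb, Fin.map_valEmbedding_Iic, Fin.coe_castSucc]

lemma ezS_snoc_castSucc {r : ℕ} (n : Fin (r+1) → ℕ+) (a : ℕ+) (j : Fin (r+1)) :
    ezS (Fin.snoc n a) j.castSucc = ezS n j := by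
  unfold ezS
  rw [ezIic_castSucc, Finset.sum_map]
  apply Finset.sum_congr rfl
  intro i _
  congr 1
  exact Fin.snoc_castSucc (α := fun _ : Fin (r+1+1) => ℕ+) (p := n) (x := a) (i := i)

lemma ezS_snoc_last {r : ℕ} (n : Fin (r+1) → ℕ+) (a : ℕ+) :
    ezS (Fin.snoc n a) (Fin.last (r+1)) = ezS n (Fin.last r) + (a : ℕ) := by
  unfold ezS
  have hIic : ∀ m : ℕ, Finset.Iic (Fin.last m) = (Finset.univ : Finset (Fin (m+1))) := by
    intro m
    ext i
    simp [Fin.le_last]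
  rw [hIic, hIic, Fin.sum_univ_castSucc]
  simp

lemma ezA_succ (r : ℕ) (t s : ℝ) :
    ezA (r+1) t s = ∑' n : Fin (r+1) → ℕ+,
      ((∏ j : Fin r, (ezS n j.castSucc : ℝ≥0∞) ^ (-t)) * (ezS n (Fin.last r) : ℝ≥0∞) ^ (-t))
        * ezTailE s (ezS n (Fin.last r)) := by
  rw [ezA, ← (Fin.snocEquiv (fun _ => ℕ+)).tsum_eq, ENNReal.tsum_prod', ENNReal.tsum_comm]
  apply tsum_congr
  intro n
  have hterm : ∀ a : ℕ+,
      (∏ j : Fin (r+1), (ezS (Fin.snocEquiv (fun _ => ℕ+) (a, n)) j.castSucc : ℝ≥0∞) ^ (-t)) *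
        (ezS (Fin.snocEquiv (fun _ => ℕ+) (a, n)) (Fin.last (r+1)) : ℝ≥0∞) ^ (-s)
      = ((∏ j : Fin r, (ezS n j.castSucc : ℝ≥0∞) ^ (-t)) * (ezS n (Fin.last r) : ℝ≥0∞) ^ (-t))
        * ((ezS n (Fin.last r) + (a:ℕ) : ℕ) : ℝ≥0∞) ^ (-s) := by
    intro a
    have he : (Fin.snocEquiv (fun _ => ℕ+) (a, n)) = Fin.snoc n a := by
      ext i
      simp [Fin.snocEquiv]
    rw [he]
    congr 1
    · rw [Fin.prod_univ_castSucc]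
      congr 1
      · apply Finset.prod_congr rfl
        intro j _
        rw [ezS_snoc_castSucc]
      · rw [ezS_snoc_castSucc]
    · rw [ezS_snoc_last]
  calc ∑' a : ℕ+, (∏ j : Fin (r+1), (ezS (Fin.snocEquiv (fun _ => ℕ+) (a, n)) j.castSucc : ℝ≥0∞) ^ (-t)) *
        (ezS (Fin.snocEquiv (fun _ => ℕ+) (a, n)) (Fin.last (r+1)) : ℝ≥0∞) ^ (-s)
      = ∑' a : ℕ+, ((∏ j : Fin r, (ezS n j.castSucc : ℝ≥0∞) ^ (-t)) * (ezS n (Fin.last r) : ℝ≥0∞) ^ (-t))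
        * ((ezS n (Fin.last r) + (a:ℕ) : ℕ) : ℝ≥0∞) ^ (-s) := tsum_congr hterm
    _ = _ := by rw [ENNReal.tsum_mul_left]; rfl

lemma ezA_zero (t s : ℝ) : ezA 0 t s = ezTailE s 0 := by
  rw [ezA, ezTailE, ← (Equiv.funUnique (Fin 1) ℕ+).symm.tsum_eq]
  apply tsum_congr
  intro a
  simp only [Finset.univ_eq_empty, Finset.prod_empty, one_mul]
  congr 2
  · show ezS (fun _ => a) (Fin.last 0) = 0 + (a : ℕ)
    rw [ezS]
    simp

lemma ezRpow_combine {m : ℕ} (hm : 1 ≤ m) (t s : ℝ) :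
    (m : ℝ≥0∞) ^ (-t) * (m : ℝ≥0∞) ^ (1 - s) = (m : ℝ≥0∞) ^ (-(s + t - 1)) := by
  rw [← ENNReal.rpow_add _ _ (by exact_mod_cast Nat.one_le_iff_ne_zero.mp hm) (by simp)]
  ring_nf

/-- peel upper bound -/
lemma ezPeel_upper {t s : ℝ} (ht : 1 < t) (hs : 1 < s) (r : ℕ) :
    ENNReal.ofReal (s - 1) * ezA (r+1) t s ≤ ezA r t (s + t - 1) := by
  rw [ezA_succ, ezA_def, ← ENNReal.tsum_mul_left]
  apply ENNReal.tsum_le_tsum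
  intro n
  set m := ezS n (Fin.last r) with hm
  have hm1 : 1 ≤ m := ezS_one_le n _
  calc ENNReal.ofReal (s-1) * (((∏ j : Fin r, (ezS n j.castSucc : ℝ≥0∞) ^ (-t)) * (m : ℝ≥0∞) ^ (-t)) * ezTailE s m)
      = ((∏ j : Fin r, (ezS n j.castSucc : ℝ≥0∞) ^ (-t)) * (m : ℝ≥0∞) ^ (-t)) * (ENNReal.ofReal (s-1) * ezTailE s m) := by ring
    _ ≤ ((∏ j : Fin r, (ezS n j.castSucc : ℝ≥0∞) ^ (-t)) * (m : ℝ≥0∞) ^ (-t)) * ((m : ℝ≥0∞) ^ (1-s)) := by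
        exact mul_le_mul_right (ezTailE_le hs hm1) _
    _ = (∏ j : Fin r, (ezS n j.castSucc : ℝ≥0∞) ^ (-t)) * ((m : ℝ≥0∞) ^ (-t) * (m : ℝ≥0∞) ^ (1-s)) := by ring
    _ = (∏ j : Fin r, (ezS n j.castSucc : ℝ≥0∞) ^ (-t)) * (m : ℝ≥0∞) ^ (-(s + t - 1)) := by
        rw [ezRpow_combine hm1]

/-- peel lower bound -/
lemma ezPeel_lower {t s : ℝ} (ht : 1 < t) (hs : 1 < s) (r : ℕ) :
    ENNReal.ofReal ((2:ℝ) ^ (1-s)) * ezA r t (s + t - 1) ≤ ENNReal.ofReal (s - 1) * ezA (r+1) t s := by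
  rw [ezA_succ, ezA_def, ← ENNReal.tsum_mul_left, ← ENNReal.tsum_mul_left]
  apply ENNReal.tsum_le_tsum
  intro n
  set m := ezS n (Fin.last r) with hm
  have hm1 : 1 ≤ m := ezS_one_le n _
  calc ENNReal.ofReal ((2:ℝ)^(1-s)) * ((∏ j : Fin r, (ezS n j.castSucc : ℝ≥0∞) ^ (-t)) * (m : ℝ≥0∞) ^ (-(s+t-1)))
      = (∏ j : Fin r, (ezS n j.castSucc : ℝ≥0∞) ^ (-t)) * ((m : ℝ≥0∞) ^ (-t) * (ENNReal.ofReal ((2:ℝ)^(1-s)) * (m : ℝ≥0∞) ^ (1-s))) := by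
        rw [← ezRpow_combine hm1 t s]; ring
    _ ≤ (∏ j : Fin r, (ezS n j.castSucc : ℝ≥0∞) ^ (-t)) * ((m : ℝ≥0∞) ^ (-t) * (ENNReal.ofReal (s-1) * ezTailE s m)) := by
        exact mul_le_mul_right (mul_le_mul_right (ezLe_tailE hs hm1) _) _
    _ = ENNReal.ofReal (s-1) * (((∏ j : Fin r, (ezS n j.castSucc : ℝ≥0∞) ^ (-t)) * (m : ℝ≥0∞) ^ (-t)) * ezTailE s m) := by ring

/-- main upper bound -/
lemma ezA_upper (r : ℕ) : ∀ (t s : ℝ), 1 < t → 1 < s →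
    ENNReal.ofReal (∏ j ∈ Finset.range (r+1), (s + j*(t-1) - 1)) * ezA r t s ≤
      ENNReal.ofReal (s + r*(t-1)) := by
  induction r with
  | zero =>
    intro t s ht hs
    simpa [ezA_zero] using ezTailE_zero_le hs
  | succ r ih =>
    intro t s ht hs
    have hs' : 1 < s + t - 1 := by linarith
    have hprod : (∏ j ∈ Finset.range (r+2), (s + j*(t-1) - 1)) =
        (∏ j ∈ Finset.range (r+1), ((s + t - 1) + j*(t-1) - 1)) * (s - 1) := by
      rw [Finset.prod_range_succ']
      congr 1
      · apply Finset.prod_congr rfl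
        intro j _
        push_cast
        ring
      · norm_num
    have hP : 0 ≤ ∏ j ∈ Finset.range (r+1), ((s + t - 1) + j*(t-1) - 1) := by
      apply Finset.prod_nonneg
      intro j _
      have : (0:ℝ) ≤ j * (t-1) := mul_nonneg (Nat.cast_nonneg j) (by linarith)
      linarith
    calc ENNReal.ofReal (∏ j ∈ Finset.range (r+2), (s + j*(t-1) - 1)) * ezA (r+1) t s
        = ENNReal.ofReal (∏ j ∈ Finset.range (r+1), ((s + t - 1) + j*(t-1) - 1)) *
            (ENNReal.ofReal (s - 1) * ezA (r+1) t s) := by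
          rw [hprod, ENNReal.ofReal_mul hP]; ring
      _ ≤ ENNReal.ofReal (∏ j ∈ Finset.range (r+1), ((s + t - 1) + j*(t-1) - 1)) * ezA r t (s+t-1) :=
          mul_le_mul_right (ezPeel_upper ht hs r) _
      _ ≤ ENNReal.ofReal ((s + t - 1) + r*(t-1)) := ih t (s+t-1) ht hs'
      _ = ENNReal.ofReal (s + ((r+1 : ℕ) : ℝ)*(t-1)) := by
          congr 1
          push_cast
          ring

/-- main lower bound -/
lemma ezA_lower (r : ℕ) : ∀ (t s : ℝ), 1 < t → 1 < s →
    ENNReal.ofReal (∏ j ∈ Finset.range r, (2:ℝ) ^ (1 - (s + j*(t-1)))) ≤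
      ENNReal.ofReal (∏ j ∈ Finset.range (r+1), (s + j*(t-1) - 1)) * ezA r t s := by
  induction r with
  | zero =>
    intro t s ht hs
    simpa [ezA_zero] using ezLe_tailE_zero hs
  | succ r ih =>
    intro t s ht hs
    have hs' : 1 < s + t - 1 := by linarith
    have hprod : (∏ j ∈ Finset.range (r+2), (s + j*(t-1) - 1)) =
        (∏ j ∈ Finset.range (r+1), ((s + t - 1) + j*(t-1) - 1)) * (s - 1) := by
      rw [Finset.prod_range_succ']
      congr 1
      · apply Finset.prod_congr rfl
        intro j _
        push_cast
        ring
      · norm_num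
    have hQ : (∏ j ∈ Finset.range (r+1), (2:ℝ) ^ (1 - (s + j*(t-1)))) =
        (2:ℝ) ^ (1 - s) * ∏ j ∈ Finset.range r, (2:ℝ) ^ (1 - ((s + t - 1) + j*(t-1))) := by
      rw [Finset.prod_range_succ']
      rw [mul_comm]
      congr 1
      · norm_num
      · apply Finset.prod_congr rfl
        intro j _
        congr 1
        push_cast
        ring
    have hP : 0 ≤ ∏ j ∈ Finset.range (r+1), ((s + t - 1) + j*(t-1) - 1) := by
      apply Finset.prod_nonneg
      intro j _
      have : (0:ℝ) ≤ j * (t-1) := mul_nonneg (Nat.cast_nonneg j) (by linarith)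
      linarith
    calc ENNReal.ofReal (∏ j ∈ Finset.range (r+1), (2:ℝ) ^ (1 - (s + j*(t-1))))
        = ENNReal.ofReal ((2:ℝ) ^ (1-s)) * ENNReal.ofReal (∏ j ∈ Finset.range r, (2:ℝ) ^ (1 - ((s + t - 1) + j*(t-1)))) := by
          rw [hQ, ENNReal.ofReal_mul (by positivity)]
      _ ≤ ENNReal.ofReal ((2:ℝ) ^ (1-s)) *
            (ENNReal.ofReal (∏ j ∈ Finset.range (r+1), ((s + t - 1) + j*(t-1) - 1)) * ezA r t (s+t-1)) :=
          mul_le_mul_right (ih t (s+t-1) ht hs') _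
      _ = ENNReal.ofReal (∏ j ∈ Finset.range (r+1), ((s + t - 1) + j*(t-1) - 1)) *
            (ENNReal.ofReal ((2:ℝ) ^ (1-s)) * ezA r t (s+t-1)) := by ring
      _ ≤ ENNReal.ofReal (∏ j ∈ Finset.range (r+1), ((s + t - 1) + j*(t-1) - 1)) *
            (ENNReal.ofReal (s-1) * ezA (r+1) t s) :=
          mul_le_mul_right (ezPeel_lower ht hs r) _
      _ = ENNReal.ofReal (∏ j ∈ Finset.range (r+2), (s + j*(t-1) - 1)) * ezA (r+1) t s := by
          rw [hprod, ENNReal.ofReal_mul hP]; ring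

noncomputable def ezZR (r : ℕ) (t : ℝ) : ℝ := (ezA r t t).toReal

lemma ezPfact (r : ℕ) {t : ℝ} :
    (∏ j ∈ Finset.range (r+1), (t + j*(t-1) - 1)) = ((r+1).factorial : ℝ) * (t-1)^(r+1) := by
  have h : ∀ j ∈ Finset.range (r+1), (t + (j:ℝ)*(t-1) - 1) = ((j:ℝ)+1) * (t-1) := by
    intro j _
    ring
  rw [Finset.prod_congr rfl h, Finset.prod_mul_distrib, Finset.prod_const]
  congr 1
  · rw [← Finset.prod_range_add_one_eq_factorial, Nat.cast_prod]
    apply Finset.prod_congr rfl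
    intro j _
    push_cast
    ring
  · rw [Finset.card_range]

lemma ezPfact_pos (r : ℕ) {t : ℝ} (ht : 1 < t) :
    0 < ((r+1).factorial : ℝ) * (t-1)^(r+1) := by
  have h1 : (0:ℝ) < t - 1 := by linarith
  positivity

lemma ezA_ne_top (r : ℕ) {t : ℝ} (ht : 1 < t) : ezA r t t ≠ ∞ := by
  intro htop
  have h := ezA_upper r t t ht ht
  rw [htop, ezPfact r] at h
  rw [ENNReal.mul_top (by
    simp only [ne_eq, ENNReal.ofReal_eq_zero, not_le]
    exact ezPfact_pos r ht)] at h
  exact absurd h (by simp)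

lemma ezZR_nonneg (r : ℕ) (t : ℝ) : 0 ≤ ezZR r t := ENNReal.toReal_nonneg

lemma ezReal_upper (r : ℕ) {t : ℝ} (ht : 1 < t) :
    ((r+1).factorial : ℝ) * (t-1)^(r+1) * ezZR r t ≤ 1 + (r+1)*(t-1) := by
  have h := ezA_upper r t t ht ht
  rw [ezPfact r, ← ENNReal.ofReal_toReal (ezA_ne_top r ht),
    ← ENNReal.ofReal_mul (ezPfact_pos r ht).le] at h
  have h2 := (ENNReal.ofReal_le_ofReal_iff (by nlinarith)).mp h
  calc ((r+1).factorial : ℝ) * (t-1)^(r+1) * ezZR r t ≤ t + r*(t-1) := h2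
    _ = 1 + (r+1)*(t-1) := by ring

lemma ezReal_lower (r : ℕ) {t : ℝ} (ht : 1 < t) :
    (∏ j ∈ Finset.range r, (2:ℝ) ^ (1 - (t + j*(t-1)))) ≤
      ((r+1).factorial : ℝ) * (t-1)^(r+1) * ezZR r t := by
  have h := ezA_lower r t t ht ht
  rw [ezPfact r, ← ENNReal.ofReal_toReal (ezA_ne_top r ht),
    ← ENNReal.ofReal_mul (ezPfact_pos r ht).le] at h
  exact (ENNReal.ofReal_le_ofReal_iff
    (mul_nonneg (ezPfact_pos r ht).le (ezZR_nonneg r t))).mp h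

lemma ezTendstoQ (r : ℕ) :
    Tendsto (fun t : ℝ => ∏ j ∈ Finset.range r, (2:ℝ) ^ (1 - (t + j*(t-1))))
      (nhdsWithin 1 (Set.Ioi 1)) (nhds 1) := by
  have hrw : ∀ t : ℝ, (∏ j ∈ Finset.range r, (2:ℝ) ^ (1 - (t + j*(t-1)))) =
      ∏ j ∈ Finset.range r, Real.exp (Real.log 2 * (1 - (t + j*(t-1)))) := by
    intro t
    apply Finset.prod_congr rfl
    intro j _
    rw [Real.rpow_def_of_pos (by norm_num)]
  simp only [hrw]
  have hcont : Continuous (fun t : ℝ => ∏ j ∈ Finset.range r, Real.exp (Real.log 2 * (1 - (t + j*(t-1))))) := by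
    apply continuous_finset_prod
    intro j _
    fun_prop
  have hval : (∏ j ∈ Finset.range r, Real.exp (Real.log 2 * (1 - ((1:ℝ) + j*((1:ℝ)-1))))) = 1 := by
    apply Finset.prod_eq_one
    intro j _
    norm_num
  have h1 := hcont.tendsto 1
  rw [hval] at h1
  exact h1.mono_left nhdsWithin_le_nhds

lemma ezMainReal (r : ℕ) :
    Tendsto (fun t : ℝ => (t-1)^(r+1) * ezZR r t)
      (nhdsWithin 1 (Set.Ioi 1)) (nhds (1 / ((r+1).factorial : ℝ))) := by
  have hfac : (0:ℝ) < ((r+1).factorial : ℝ) := by positivity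
  apply tendsto_of_tendsto_of_tendsto_of_le_of_le'
    (g := fun t : ℝ => (∏ j ∈ Finset.range r, (2:ℝ) ^ (1 - (t + j*(t-1)))) / ((r+1).factorial : ℝ))
    (h := fun t : ℝ => (1 + ((r:ℝ)+1)*(t-1)) / ((r+1).factorial : ℝ))
  · have := (ezTendstoQ r).div_const (((r+1).factorial : ℝ))
    exact this
  · have hcont : Tendsto (fun t : ℝ => (1 + ((r:ℝ)+1)*(t-1)) / ((r+1).factorial : ℝ))
        (nhdsWithin 1 (Set.Ioi 1)) (nhds ((1 + ((r:ℝ)+1)*(1-1)) / ((r+1).factorial : ℝ))) := by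
      apply Tendsto.mono_left _ nhdsWithin_le_nhds
      apply Continuous.tendsto
      fun_prop
    simpa using hcont
  · apply eventually_nhdsWithin_of_forall
    intro t ht
    have h := ezReal_lower r (Set.mem_Ioi.mp ht)
    rw [div_le_iff₀ hfac]
    nlinarith [h]
  · apply eventually_nhdsWithin_of_forall
    intro t ht
    have h := ezReal_upper r (Set.mem_Ioi.mp ht)
    rw [le_div_iff₀ hfac]
    nlinarith [h]

lemma ezA_diag (r : ℕ) (t : ℝ) :
    ezA r t t = ∑' n : Fin (r+1) → ℕ+, ∏ j : Fin (r+1), (ezS n j : ℝ≥0∞) ^ (-t) := by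
  rw [ezA_def]
  apply tsum_congr
  intro n
  rw [Fin.prod_univ_castSucc]

lemma ezFactor_ne_top {r : ℕ} (n : Fin r → ℕ+) (t : ℝ) (j : Fin r) :
    (ezS n j : ℝ≥0∞) ^ (-t) ≠ ∞ := by
  have h1 : (ezS n j : ℝ≥0∞) ≠ 0 := by
    exact_mod_cast Nat.one_le_iff_ne_zero.mp (ezS_one_le n j)
  have h2 : (ezS n j : ℝ≥0∞) ≠ ⊤ := ENNReal.natCast_ne_top _
  simp [ENNReal.rpow_eq_top_iff, h1, h2]

lemma ezTerm_ne_top {r : ℕ} (n : Fin r → ℕ+) (t : ℝ) :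
    (∏ j : Fin r, (ezS n j : ℝ≥0∞) ^ (-t)) ≠ ∞ := by
  apply WithTop.prod_ne_top
  intro j _
  exact ezFactor_ne_top n t j

lemma ezZR_eq (r : ℕ) (t : ℝ) :
    ezZR r t = ∑' n : Fin (r+1) → ℕ+, ∏ j : Fin (r+1), ((ezS n j : ℝ)) ^ (-t) := by
  rw [ezZR, ezA_diag, ENNReal.tsum_toReal_eq (fun n => ezTerm_ne_top n t)]
  apply tsum_congr
  intro n
  rw [ENNReal.toReal_prod]
  apply Finset.prod_congr rfl
  intro j _
  rw [← ENNReal.toReal_rpow, ENNReal.toReal_natCast]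

lemma ezSummableR (r : ℕ) {t : ℝ} (ht : 1 < t) :
    Summable (fun n : Fin (r+1) → ℕ+ => ∏ j : Fin (r+1), ((ezS n j : ℝ)) ^ (-t)) := by
  have h := ENNReal.summable_toReal (by rw [← ezA_diag]; exact ezA_ne_top r ht)
  apply h.congr
  intro n
  rw [ENNReal.toReal_prod]
  apply Finset.prod_congr rfl
  intro j _
  rw [← ENNReal.toReal_rpow, ENNReal.toReal_natCast]

lemma ezEZ_eq (r : ℕ) {t : ℝ} (ht : 1 < t) :
    eulerZagierZeta (fun _ : Fin (r+1) => (t:ℂ)) = ((ezZR r t : ℝ) : ℂ) := by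
  rw [ezZR_eq, Complex.ofReal_tsum]
  apply tsum_congr
  intro n
  rw [Complex.ofReal_prod]
  apply Finset.prod_congr rfl
  intro j _
  have h0 : (0:ℝ) ≤ ((ezS n j : ℕ) : ℝ) := Nat.cast_nonneg _
  show (∑ i ∈ Finset.Iic j, ((n i : ℕ) : ℂ)) ^ (-(t:ℂ)) = ((((ezS n j : ℝ)) ^ (-t) : ℝ) : ℂ)
  have hbase : (∑ i ∈ Finset.Iic j, ((n i : ℕ) : ℂ)) = (((ezS n j : ℕ) : ℝ) : ℂ) := by
    rw [ezS]
    push_cast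
    rfl
  have hexp : (-(t:ℂ)) = (((-t : ℝ)) : ℂ) := by norm_num
  rw [hbase, hexp, ← Complex.ofReal_cpow h0]

theorem statement15 (r : ℕ) (hr : 1 ≤ r) :
    Tendsto (fun t : ℝ => ((t : ℂ) - 1) ^ r * eulerZagierZeta (fun _ : Fin r => (t : ℂ)))
      (nhdsWithin 1 (Set.Ioi 1)) (nhds (1 / (r.factorial : ℂ))) := by
  obtain ⟨m, rfl⟩ : ∃ m, r = m + 1 := ⟨r - 1, by omega⟩
  have hmain := ezMainReal m
  have hC : Tendsto (fun t : ℝ => (((t-1)^(m+1) * ezZR m t : ℝ) : ℂ))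
      (nhdsWithin 1 (Set.Ioi 1)) (nhds ((1 / ((m+1).factorial : ℝ) : ℝ) : ℂ)) :=
    (Complex.continuous_ofReal.tendsto _).comp hmain
  have hval : ((1 / ((m+1).factorial : ℝ) : ℝ) : ℂ) = 1 / (((m+1).factorial : ℕ) : ℂ) := by
    push_cast
    ring
  rw [hval] at hC
  apply hC.congr'
  apply eventually_nhdsWithin_of_forall
  intro t ht
  have h1 := ezEZ_eq m (Set.mem_Ioi.mp ht)
  show ((((t - 1) ^ (m + 1) * ezZR m t : ℝ)) : ℂ) =
    ((t:ℂ) - 1) ^ (m + 1) * eulerZagierZeta (fun _ : Fin (m+1) => (t:ℂ))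
  rw [h1]
  push_cast
  ring
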